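/- arXiv:2010.04585 — 3 statements merged into one kernel-verified Lean document; each statement's English description precedes it below -/
import Mathlib

section
/- Fix a POVM {M_a^{AA'}} on ℂ^{d_A} ⊗ ℂ^{d_{A'}} and a density matrix ρ^{A'B'} on ℂ^{d_{A'}} ⊗ ℂ^{d_{B'}}, and let Λ^{A→B'} be the associated teleportation instrument. Then for every finite dimension d_B and every POVM {M_b^{B'B}} on ℂ^{d_{B'}} ⊗ ℂ^{d_B}, the distributed measurement M^{AB} with elements M_ab = tr_{A'B'}[(M_a^{AA'} ⊗ M_b^{B'B})(1^A ⊗ ρ^{A'B'} ⊗ 1^B)] satisfies RoBN(M^{AB}) ≤ RoT(Λ^{A→B'}). -/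
open Matrix BigOperators Kronecker ComplexOrder

noncomputable section

/-- Square complex matrices of size `n`. -/
abbrev Mat (n : ℕ) : Type := Matrix (Fin n) (Fin n) ℂ

/-- Bipartite complex matrices on `ℂ^m ⊗ ℂ^n`. -/
abbrev BMat (m n : ℕ) : Type := Matrix (Fin m × Fin n) (Fin m × Fin n) ℂ

/-- A density matrix: positive semidefinite with unit trace. -/
def IsDensity {n : Type} [Fintype n] (ρ : Matrix n n ℂ) : Prop :=
  ρ.PosSemidef ∧ ρ.trace = 1

/-- A POVM: a finite family of positive semidefinite matrices summing to the identity. -/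
def IsPOVM {ι n : Type} [Fintype ι] [Fintype n] [DecidableEq n]
    (M : ι → Matrix n n ℂ) : Prop :=
  (∀ i, (M i).PosSemidef) ∧ ∑ i, M i = 1

/-- A separable bipartite operator: a finite convex combination of products of
density matrices. -/
def SepState {dA dB : ℕ} (ρ : BMat dA dB) : Prop :=
  ∃ (n : ℕ) (p : Fin n → ℝ) (ρA : Fin n → Mat dA) (ρB : Fin n → Mat dB),
    (∀ l, 0 ≤ p l) ∧ (∑ l, p l = 1) ∧
    (∀ l, IsDensity (ρA l)) ∧ (∀ l, IsDensity (ρB l)) ∧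
    ρ = ∑ l, (p l : ℂ) • (ρA l ⊗ₖ ρB l)

/-- The element `tr_{A'B'}[(Ma ⊗ Mb)(1^A ⊗ ρ^{A'B'} ⊗ 1^B)]` of a distributed
measurement (written out entrywise, after the canonical reordering of tensor factors). -/
def distMeas {dA dA' dB' dB : ℕ}
    (Ma : Matrix (Fin dA × Fin dA') (Fin dA × Fin dA') ℂ)
    (Mb : Matrix (Fin dB' × Fin dB) (Fin dB' × Fin dB) ℂ)
    (ρ : BMat dA' dB') : BMat dA dB :=
  Matrix.of fun pq rs =>
    ∑ k : Fin dA', ∑ l : Fin dB', ∑ k' : Fin dA', ∑ l' : Fin dB',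
      Ma (pq.1, k) (rs.1, k') * Mb (l, pq.2) (l', rs.2) * ρ (k', l') (k, l)

/-- Membership in `R_BN`: the family arises from local POVMs and a shared state. -/
def MemRBN {dA dB oA oB : ℕ} (M : Fin oA → Fin oB → BMat dA dB) : Prop :=
  ∃ (dA' dB' : ℕ)
    (Ma : Fin oA → Matrix (Fin dA × Fin dA') (Fin dA × Fin dA') ℂ)
    (Mb : Fin oB → Matrix (Fin dB' × Fin dB) (Fin dB' × Fin dB) ℂ)
    (ρ : BMat dA' dB'),
    IsPOVM Ma ∧ IsPOVM Mb ∧ IsDensity ρ ∧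
    ∀ a b, M a b = distMeas (Ma a) (Mb b) ρ

/-- Membership in `F_BN`: the family arises from local POVMs and a separable shared state. -/
def MemFBN {dA dB oA oB : ℕ} (M : Fin oA → Fin oB → BMat dA dB) : Prop :=
  ∃ (dA' dB' : ℕ)
    (Ma : Fin oA → Matrix (Fin dA × Fin dA') (Fin dA × Fin dA') ℂ)
    (Mb : Fin oB → Matrix (Fin dB' × Fin dB) (Fin dB' × Fin dB) ℂ)
    (ρ : BMat dA' dB'),
    IsPOVM Ma ∧ IsPOVM Mb ∧ IsDensity ρ ∧ SepState ρ ∧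
    ∀ a b, M a b = distMeas (Ma a) (Mb b) ρ

/-- Robustness of Buscemi nonlocality. -/
def RoBN {dA dB oA oB : ℕ} (M : Fin oA → Fin oB → BMat dA dB) : ℝ :=
  sInf { r : ℝ | 0 ≤ r ∧ ∃ (N O : Fin oA → Fin oB → BMat dA dB),
    MemRBN N ∧ MemFBN O ∧
    ∀ a b, M a b + (r : ℂ) • N a b = ((1 + r : ℝ) : ℂ) • O a b }

/-- Quantum simulation of a distributed measurement: shared randomness, local
pre-processing channels (given by Kraus operators) in the Heisenberg picture,
and classical post-processing of outcomes. -/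
def Simulates {dA dB oA oB oA' oB' : ℕ}
    (M : Fin oA → Fin oB → BMat dA dB)
    (M' : Fin oA' → Fin oB' → BMat dA dB) : Prop :=
  ∃ (nL : ℕ) (pL : Fin nL → ℝ)
    (pA : Fin oA' → Fin oA → Fin nL → ℝ)
    (pB : Fin oB' → Fin oB → Fin nL → ℝ)
    (kE : Fin nL → ℕ) (KE : (l : Fin nL) → Fin (kE l) → Mat dA)
    (kN : Fin nL → ℕ) (KN : (l : Fin nL) → Fin (kN l) → Mat dB),
    (∀ l, 0 ≤ pL l) ∧ (∑ l, pL l = 1) ∧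
    (∀ a i l, 0 ≤ pA a i l) ∧ (∀ i l, ∑ a, pA a i l = 1) ∧
    (∀ b j l, 0 ≤ pB b j l) ∧ (∀ j l, ∑ b, pB b j l = 1) ∧
    (∀ l, ∑ s : Fin (kE l), (KE l s)ᴴ * KE l s = 1) ∧
    (∀ l, ∑ t : Fin (kN l), (KN l t)ᴴ * KN l t = 1) ∧
    ∀ a b, M' a b = ∑ l : Fin nL, ∑ i : Fin oA, ∑ j : Fin oB,
      ((pL l * pA a i l * pB b j l : ℝ) : ℂ) •
        ∑ s : Fin (kE l), ∑ t : Fin (kN l),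
          (KE l s ⊗ₖ KN l t)ᴴ * M i j * (KE l s ⊗ₖ KN l t)

/-- An ensemble of bipartite states: a probability distribution together with
density matrices. -/
def IsEnsemble {dA dB oA oB : ℕ} (p : Fin oA → Fin oB → ℝ)
    (σ : Fin oA → Fin oB → BMat dA dB) : Prop :=
  (∀ x y, 0 ≤ p x y) ∧ (∑ x, ∑ y, p x y = 1) ∧ ∀ x y, IsDensity (σ x y)

/-- Guessing probability in distributed state discrimination with a distributed
measurement `M`. -/
def pDSD {dA dB oA oB : ℕ} (p : Fin oA → Fin oB → ℝ)
    (σ : Fin oA → Fin oB → BMat dA dB)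
    (M : Fin oA → Fin oB → BMat dA dB) : ℝ :=
  sSup { v : ℝ | ∃ N : Fin oA → Fin oB → BMat dA dB, Simulates M N ∧
    v = ∑ x : Fin oA, ∑ y : Fin oB, p x y * ((N x y * σ x y).trace).re }

/-- Classical value of distributed state discrimination. -/
def pDSDc {dA dB oA oB : ℕ} (p : Fin oA → Fin oB → ℝ)
    (σ : Fin oA → Fin oB → BMat dA dB) : ℝ :=
  sSup { v : ℝ | ∃ N : Fin oA → Fin oB → BMat dA dB, MemFBN N ∧ v = pDSD p σ N }

/-- The subchannel `ω ↦ tr_{AA'}[(Ma ⊗ 1^{B'})(ω ⊗ ρ^{A'B'})]` of a teleportation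
instrument (written out entrywise). -/
def telep {dA dA' dB' : ℕ}
    (Ma : Matrix (Fin dA × Fin dA') (Fin dA × Fin dA') ℂ)
    (ρ : BMat dA' dB') (ω : Mat dA) : Mat dB' :=
  Matrix.of fun l l' =>
    ∑ i : Fin dA, ∑ k : Fin dA', ∑ i' : Fin dA, ∑ k' : Fin dA',
      Ma (i, k) (i', k') * ω i' i * ρ (k', l) (k, l')

/-- Membership in `R_T`: the instrument is a teleportation instrument. -/
def MemRT {dA dB' oA : ℕ} (Λ : Fin oA → Mat dA → Mat dB') : Prop :=
  ∃ (dA' : ℕ) (Ma : Fin oA → Matrix (Fin dA × Fin dA') (Fin dA × Fin dA') ℂ)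
    (ρ : BMat dA' dB'),
    IsPOVM Ma ∧ IsDensity ρ ∧ ∀ a ω, Λ a ω = telep (Ma a) ρ ω

/-- Membership in `F_T`: a teleportation instrument realizable with a separable state. -/
def MemFT {dA dB' oA : ℕ} (Λ : Fin oA → Mat dA → Mat dB') : Prop :=
  ∃ (dA' : ℕ) (Ma : Fin oA → Matrix (Fin dA × Fin dA') (Fin dA × Fin dA') ℂ)
    (ρ : BMat dA' dB'),
    IsPOVM Ma ∧ IsDensity ρ ∧ SepState ρ ∧ ∀ a ω, Λ a ω = telep (Ma a) ρ ω

/-- Robustness of teleportation. -/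
def RoT {dA dB' oA : ℕ} (Λ : Fin oA → Mat dA → Mat dB') : ℝ :=
  sInf { r : ℝ | 0 ≤ r ∧ ∃ (Ω Γ : Fin oA → Mat dA → Mat dB'),
    MemRT Ω ∧ MemFT Γ ∧
    ∀ a ω, Λ a ω + (r : ℂ) • Ω a ω = ((1 + r : ℝ) : ℂ) • Γ a ω }

/-- Quantum simulation of a teleportation instrument:
`Φ_a = Σ_{i,λ} p(λ) p(a|i,λ) E_λ ∘ Λ_i ∘ N_λ` with channels given by Kraus operators. -/
def SimInstr {dA dB' o o' : ℕ} (Λ : Fin o → Mat dA → Mat dB')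
    (Φ : Fin o' → Mat dA → Mat dB') : Prop :=
  ∃ (nL : ℕ) (pL : Fin nL → ℝ) (pA : Fin o' → Fin o → Fin nL → ℝ)
    (kN : Fin nL → ℕ) (KN : (l : Fin nL) → Fin (kN l) → Mat dA)
    (kE : Fin nL → ℕ) (KE : (l : Fin nL) → Fin (kE l) → Mat dB'),
    (∀ l, 0 ≤ pL l) ∧ (∑ l, pL l = 1) ∧
    (∀ a i l, 0 ≤ pA a i l) ∧ (∀ i l, ∑ a, pA a i l = 1) ∧
    (∀ l, ∑ s : Fin (kN l), (KN l s)ᴴ * KN l s = 1) ∧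
    (∀ l, ∑ t : Fin (kE l), (KE l t)ᴴ * KE l t = 1) ∧
    ∀ a ω, Φ a ω = ∑ l : Fin nL, ∑ i : Fin o,
      ((pL l * pA a i l : ℝ) : ℂ) •
        ∑ t : Fin (kE l),
          KE l t * Λ i (∑ s : Fin (kN l), KN l s * ω * (KN l s)ᴴ) * (KE l t)ᴴ

/-- `(Φ ⊗ id^B)[σ]` for a map `Φ` acting on the first tensor factor. -/
def appFst {dA dB' dB : ℕ} (Φ : Mat dA → Mat dB') (σ : BMat dA dB) : BMat dB' dB :=
  Matrix.of fun pq rs =>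
    Φ (Matrix.of fun i i' => σ (i, pq.2) (i', rs.2)) pq.1 rs.1

/-- Guessing probability in teleportation-assisted state discrimination with
instrument `Λ`. -/
def pTSD {dA dB' o dB oA oB : ℕ} (p : Fin oA → Fin oB → ℝ)
    (σ : Fin oA → Fin oB → BMat dA dB)
    (Λ : Fin o → Mat dA → Mat dB') : ℝ :=
  sSup { v : ℝ | ∃ (Mb : Fin oB → Matrix (Fin dB' × Fin dB) (Fin dB' × Fin dB) ℂ)
      (Φ : Fin oA → Mat dA → Mat dB'),
    IsPOVM Mb ∧ SimInstr Λ Φ ∧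
    v = ∑ x : Fin oA, ∑ y : Fin oB,
      p x y * ((Mb y * appFst (Φ x) (σ x y)).trace).re }

/-- Classical value of teleportation-assisted state discrimination. -/
def pTSDc (dB' : ℕ) {dA dB oA oB : ℕ} (p : Fin oA → Fin oB → ℝ)
    (σ : Fin oA → Fin oB → BMat dA dB) : ℝ :=
  sSup { v : ℝ | ∃ (o' : ℕ) (F : Fin o' → Mat dA → Mat dB'),
    MemFT F ∧ v = pTSD p σ F }

/-- Generalized robustness of entanglement. -/
def RoE {dA dB : ℕ} (ρ : BMat dA dB) : ℝ :=
  sInf { r : ℝ | 0 ≤ r ∧ ∃ (η σ : BMat dA dB),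
    IsDensity η ∧ IsDensity σ ∧ SepState σ ∧
    ρ + (r : ℂ) • η = ((1 + r : ℝ) : ℂ) • σ }

/-- Guessing probability in entanglement-assisted state discrimination with
shared state `ρ`. -/
def pESD {dA dB oA oB dA' dB' : ℕ} (p : Fin oA → Fin oB → ℝ)
    (σ : Fin oA → Fin oB → BMat dA dB) (ρ : BMat dA' dB') : ℝ :=
  sSup { v : ℝ | ∃ (Ma : Fin oA → Matrix (Fin dA × Fin dA') (Fin dA × Fin dA') ℂ)
      (Mb : Fin oB → Matrix (Fin dB' × Fin dB) (Fin dB' × Fin dB) ℂ),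
    IsPOVM Ma ∧ IsPOVM Mb ∧
    v = ∑ x : Fin oA, ∑ y : Fin oB,
      p x y * ((distMeas (Ma x) (Mb y) ρ * σ x y).trace).re }

/-- Classical value of entanglement-assisted state discrimination. -/
def pESDc {dA dB oA oB : ℕ} (p : Fin oA → Fin oB → ℝ)
    (σ : Fin oA → Fin oB → BMat dA dB) : ℝ :=
  sSup { v : ℝ | ∃ (dA' dB' : ℕ) (ρ : BMat dA' dB'),
    IsDensity ρ ∧ SepState ρ ∧ v = pESD p σ ρ }

/-- Partial trace over the second tensor factor. -/
def ptraceSnd {m n : Type} [Fintype n] (M : Matrix (m × n) (m × n) ℂ) : Matrix m m ℂ :=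
  Matrix.of fun i j => ∑ k : n, M (i, k) (j, k)

/-- Partial trace over the first tensor factor. -/
def ptraceFst {m n : Type} [Fintype m] (M : Matrix (m × n) (m × n) ℂ) : Matrix n n ℂ :=
  Matrix.of fun i j => ∑ k : m, M (k, i) (k, j)

/-- Average score in a general no-signalling game with scoring function `V`. -/
def pV {dA dB oA oB nX nY : ℕ} (p : Fin nX → Fin nY → ℝ)
    (σ : Fin nX → Fin nY → BMat dA dB)
    (V : Fin oA → Fin oB → Fin nX → Fin nY → ℝ)
    (M : Fin oA → Fin oB → BMat dA dB) : ℝ :=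
  ∑ a : Fin oA, ∑ b : Fin oB, ∑ x : Fin nX, ∑ y : Fin nY,
    p x y * ((M a b * σ x y).trace).re * V a b x y

/-- Min-accessible information of a channel, with base-2 logarithms. -/
def IaccMin {dA dB : ℕ} {out : Type} [Fintype out] [DecidableEq out]
    (N : BMat dA dB → Matrix out out ℂ) : ℝ :=
  sSup { v : ℝ | ∃ (n m : ℕ) (p : Fin n → ℝ) (σ : Fin n → BMat dA dB)
      (D : Fin m → Matrix out out ℂ),
    (∀ x, 0 ≤ p x) ∧ (∑ x, p x = 1) ∧ (∀ x, IsDensity (σ x)) ∧ IsPOVM D ∧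
    v = Real.logb 2 (∑ g : Fin m, ⨆ x : Fin n, p x * ((N (σ x) * D g).trace).re)
      - Real.logb 2 (⨆ x : Fin n, p x) }

/-! ### Auxiliary lemmas for `robn_le_rot` -/

lemma psd_add' {n : Type} [Fintype n] {A B : Matrix n n ℂ}
    (hA : A.PosSemidef) (hB : B.PosSemidef) : (A + B).PosSemidef :=
  ⟨hA.1.add hB.1, fun x => by
    simpa [mul_add, add_mul] using add_nonneg (hA.2 x) (hB.2 x)⟩

lemma psd_smul' {n : Type} [Fintype n] {A : Matrix n n ℂ}
    (hA : A.PosSemidef) {c : ℝ} (hc : 0 ≤ c) : ((c : ℂ) • A).PosSemidef := by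
  refine ⟨?_, fun x => ?_⟩
  · unfold Matrix.IsHermitian
    rw [Matrix.conjTranspose_smul, hA.1.eq]
    simp [Complex.star_def, Complex.conj_ofReal]
  · exact (hA.smul (a := (c : ℂ)) (by exact_mod_cast hc)).2 x

lemma one_sub_psd' {n : Type} [Fintype n] [DecidableEq n] {A : Matrix n n ℂ}
    (hA : A.PosSemidef) (ht : A.trace = 1) : (1 - A).PosSemidef := by
  have h := hA.1
  have hspec := h.spectral_theorem
  set U : Matrix n n ℂ := (h.eigenvectorUnitary : Matrix n n ℂ) with hU
  have hUU : U * star U = 1 := (Matrix.mem_unitaryGroup_iff).mp h.eigenvectorUnitary.2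
  have htr : ∑ i, (h.eigenvalues i : ℂ) = 1 := by
    have : A.trace = (Matrix.diagonal (RCLike.ofReal ∘ h.eigenvalues)).trace := by
      conv_lhs => rw [hspec]
      rw [Unitary.conjStarAlgAut_apply]
      rw [Matrix.trace_mul_cycle]
      congr 1
      rw [(Matrix.mem_unitaryGroup_iff').mp h.eigenvectorUnitary.2, one_mul]
    rw [ht] at this
    simpa [Matrix.trace_diagonal] using this.symm
  have hsum : ∑ i, h.eigenvalues i = 1 := by exact_mod_cast htr
  have hle : ∀ i, h.eigenvalues i ≤ 1 := by
    intro i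
    rw [← hsum]
    exact Finset.single_le_sum (fun j _ => hA.eigenvalues_nonneg j) (Finset.mem_univ i)
  have key : 1 - A = U * Matrix.diagonal (fun i => ((1 - h.eigenvalues i : ℝ) : ℂ)) * star U := by
    have h1 : (1 : Matrix n n ℂ) = U * 1 * star U := by rw [mul_one, hUU]
    conv_lhs => rw [hspec, h1]
    rw [Unitary.conjStarAlgAut_apply]
    rw [← Matrix.sub_mul, ← Matrix.mul_sub]
    congr 2
    rw [← Matrix.diagonal_one, Matrix.diagonal_sub]
    ext i
    simp [Complex.ofReal_sub]
  rw [key]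
  have hd : (Matrix.diagonal (fun i => ((1 - h.eigenvalues i : ℝ) : ℂ))).PosSemidef := by
    refine Matrix.posSemidef_diagonal_iff.mpr fun i => ?_
    rw [Complex.zero_le_real]
    linarith [hle i]
  simpa [Matrix.star_eq_conjTranspose] using hd.mul_mul_conjTranspose_same U

/-- matrix unit -/
def munit {dA : ℕ} (r p : Fin dA) : Mat dA :=
  Matrix.of fun x y => if x = r ∧ y = p then 1 else 0

lemma telep_munit {dA dA' dB' : ℕ}
    (Ma : Matrix (Fin dA × Fin dA') (Fin dA × Fin dA') ℂ)
    (ρ : BMat dA' dB') (r p : Fin dA) (l l' : Fin dB') :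
    telep Ma ρ (munit r p) l l' =
      ∑ k : Fin dA', ∑ k' : Fin dA', Ma (p, k) (r, k') * ρ (k', l) (k, l') := by
  unfold telep munit
  simp only [Matrix.of_apply, mul_ite, mul_one, mul_zero, ite_mul, zero_mul, ite_and]
  rw [Finset.sum_comm]
  simp [Finset.sum_ite_eq, Finset.sum_ite_irrel, Finset.sum_ite_eq']

lemma distMeas_entry {dA dA' dB' dB : ℕ}
    (Ma : Matrix (Fin dA × Fin dA') (Fin dA × Fin dA') ℂ)
    (Mb : Matrix (Fin dB' × Fin dB) (Fin dB' × Fin dB) ℂ)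
    (ρ : BMat dA' dB') (p r : Fin dA) (q s : Fin dB) :
    distMeas Ma Mb ρ (p, q) (r, s) =
      ∑ l : Fin dB', ∑ l' : Fin dB',
        Mb (l, q) (l', s) * telep Ma ρ (munit r p) l' l := by
  simp only [telep_munit]
  unfold distMeas
  simp only [Matrix.of_apply]
  rw [Finset.sum_comm]
  refine Finset.sum_congr rfl fun l _ => ?_
  simp only [Finset.mul_sum]
  conv_rhs => rw [Finset.sum_comm]
  refine Finset.sum_congr rfl fun k _ => ?_
  conv_rhs => rw [Finset.sum_comm]
  refine Finset.sum_congr rfl fun k' _ => ?_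
  refine Finset.sum_congr rfl fun l' _ => ?_
  ring

lemma telep_lin {dA dA' dB' : ℕ}
    (Ma : Matrix (Fin dA × Fin dA') (Fin dA × Fin dA') ℂ)
    (ρ1 ρ2 : BMat dA' dB') (c : ℂ) (ω : Mat dA) :
    telep Ma (ρ1 + c • ρ2) ω = telep Ma ρ1 ω + c • telep Ma ρ2 ω := by
  ext l l'
  show (∑ i : Fin dA, ∑ k : Fin dA', ∑ i' : Fin dA, ∑ k' : Fin dA',
      Ma (i, k) (i', k') * ω i' i * ((ρ1 + c • ρ2) (k', l) (k, l'))) = _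
  have step : (∑ i : Fin dA, ∑ k : Fin dA', ∑ i' : Fin dA, ∑ k' : Fin dA',
      Ma (i, k) (i', k') * ω i' i * ((ρ1 + c • ρ2) (k', l) (k, l'))) =
      ∑ i : Fin dA, ∑ k : Fin dA', ∑ i' : Fin dA, ∑ k' : Fin dA',
        (Ma (i, k) (i', k') * ω i' i * ρ1 (k', l) (k, l') +
          c * (Ma (i, k) (i', k') * ω i' i * ρ2 (k', l) (k, l'))) := by
    refine Finset.sum_congr rfl fun i _ => Finset.sum_congr rfl fun k _ =>
      Finset.sum_congr rfl fun i' _ => Finset.sum_congr rfl fun k' _ => ?_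
    simp only [Matrix.add_apply, Matrix.smul_apply, smul_eq_mul]
    ring
  rw [step]
  simp only [Finset.sum_add_distrib, ← Finset.mul_sum]
  rfl

lemma telep_smul {dA dA' dB' : ℕ}
    (Ma : Matrix (Fin dA × Fin dA') (Fin dA × Fin dA') ℂ)
    (ρ2 : BMat dA' dB') (c : ℂ) (ω : Mat dA) :
    telep Ma (c • ρ2) ω = c • telep Ma ρ2 ω := by
  have h := telep_lin Ma 0 ρ2 c ω
  rw [zero_add] at h
  rw [h]
  have h0 : telep Ma (0 : BMat dA' dB') ω = 0 := by
    ext l l'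
    show (∑ i : Fin dA, ∑ k : Fin dA', ∑ i' : Fin dA, ∑ k' : Fin dA',
      Ma (i, k) (i', k') * ω i' i * ((0 : BMat dA' dB') (k', l) (k, l'))) = _
    simp
  rw [h0, zero_add]

/-- for every finite `d_B` and every POVM on Bob's side, the RoBN of
the resulting distributed measurement is at most the robustness of teleportation
of the instrument built from Alice's POVM and the shared state. -/
theorem robn_le_rot {dA dA' dB' oA : ℕ}
    (Ma : Fin oA → Matrix (Fin dA × Fin dA') (Fin dA × Fin dA') ℂ)
    (hMa : IsPOVM Ma) (ρ : BMat dA' dB') (hρ : IsDensity ρ)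
    {dB oB : ℕ} (Mb : Fin oB → Matrix (Fin dB' × Fin dB) (Fin dB' × Fin dB) ℂ)
    (hMb : IsPOVM Mb) :
    RoBN (fun a b => distMeas (Ma a) (Mb b) ρ) ≤
      RoT (fun a ω => telep (Ma a) ρ ω) := by
  classical
  -- dimensions are positive
  have hposAB : 0 < dA' * dB' := by
    rcases Nat.eq_zero_or_pos (dA' * dB') with h0 | h
    · exfalso
      have hE : IsEmpty (Fin dA' × Fin dB') := by
        rcases Nat.mul_eq_zero.mp h0 with h | h
        · subst h; exact ⟨fun x => x.1.elim0⟩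
        · subst h; exact ⟨fun x => x.2.elim0⟩
      haveI := hE
      have h2 : ρ.trace = 0 := by
        rw [Matrix.trace]
        rw [Finset.univ_eq_empty]
        simp
      rw [hρ.2] at h2
      exact (one_ne_zero : (1 : ℂ) ≠ 0) h2
    · exact h
  have hA'pos : 0 < dA' := Nat.pos_of_ne_zero (by rintro rfl; simp at hposAB)
  have hB'pos : 0 < dB' := Nat.pos_of_ne_zero (by rintro rfl; simp at hposAB)
  set c : ℝ := ((dA' * dB' : ℕ) : ℝ) with hc
  have hc0 : 0 < c := by rw [hc]; exact_mod_cast hposAB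
  have hcne : (c : ℂ) ≠ 0 := Complex.ofReal_ne_zero.mpr hc0.ne'
  have hdA : (dA' : ℝ) ≠ 0 := by exact_mod_cast hA'pos.ne'
  have hdB : (dB' : ℝ) ≠ 0 := by exact_mod_cast hB'pos.ne'
  apply csInf_le_csInf
  · exact ⟨0, fun t ht => ht.1⟩
  · -- the RoT feasible set is nonempty: take `r = dA' * dB'`
    set σmix : BMat dA' dB' := ((c⁻¹ : ℝ) : ℂ) • (1 : BMat dA' dB') with hσ
    set ρ' : BMat dA' dB' :=
      ((c⁻¹ : ℝ) : ℂ) • ((1 - ρ) + ((c⁻¹ : ℝ) : ℂ) • (1 : BMat dA' dB')) with hρ'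
    have htrone : (1 : BMat dA' dB').trace = ((dA' * dB' : ℕ) : ℂ) := by
      rw [Matrix.trace_one]
      simp
    have hσdens : IsDensity σmix := by
      constructor
      · exact psd_smul' Matrix.PosSemidef.one (inv_nonneg.mpr hc0.le)
      · rw [hσ, Matrix.trace_smul, htrone, smul_eq_mul, hc]
        push_cast
        field_simp
    have hρ'dens : IsDensity ρ' := by
      constructor
      · exact psd_smul'
          (psd_add' (one_sub_psd' hρ.1 hρ.2)
            (psd_smul' Matrix.PosSemidef.one (inv_nonneg.mpr hc0.le)))
          (inv_nonneg.mpr hc0.le)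
      · rw [hρ', Matrix.trace_smul, Matrix.trace_add, Matrix.trace_sub, Matrix.trace_smul,
          htrone, hρ.2]
        simp only [smul_eq_mul]
        rw [hc]
        push_cast
        field_simp
        ring
    have hσsep : SepState σmix := by
      refine ⟨1, fun _ => 1, fun _ => (((dA' : ℝ)⁻¹ : ℝ) : ℂ) • (1 : Mat dA'),
        fun _ => (((dB' : ℝ)⁻¹ : ℝ) : ℂ) • (1 : Mat dB'), fun _ => zero_le_one, by simp,
        fun _ => ?_, fun _ => ?_, ?_⟩
      · constructor
        · exact psd_smul' Matrix.PosSemidef.one (by positivity)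
        · rw [Matrix.trace_smul, Matrix.trace_one, smul_eq_mul]
          have : (dA' : ℝ) ≠ 0 := by exact_mod_cast hA'pos.ne'
          push_cast
          field_simp
          simp
      · constructor
        · exact psd_smul' Matrix.PosSemidef.one (by positivity)
        · rw [Matrix.trace_smul, Matrix.trace_one, smul_eq_mul]
          have : (dB' : ℝ) ≠ 0 := by exact_mod_cast hB'pos.ne'
          push_cast
          field_simp
          simp
      · rw [Finset.sum_const, Finset.card_univ]
        simp only [Fintype.card_fin, one_smul, Complex.ofReal_one]
        rw [Matrix.smul_kronecker, Matrix.kronecker_smul, Matrix.one_kronecker_one, hσ]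
        rw [smul_smul]
        congr 1
        push_cast
        rw [hc]
        push_cast
        rw [mul_inv]
    refine ⟨c, hc0.le, (fun a ω => telep (Ma a) ρ' ω), (fun a ω => telep (Ma a) σmix ω),
      ⟨dA', Ma, ρ', hMa, hρ'dens, fun a ω => rfl⟩,
      ⟨dA', Ma, σmix, hMa, hσdens, hσsep, fun a ω => rfl⟩, fun a ω => ?_⟩
    show telep (Ma a) ρ ω + (c : ℂ) • telep (Ma a) ρ' ω =
      ((1 + c : ℝ) : ℂ) • telep (Ma a) σmix ω
    rw [← telep_lin, ← telep_smul]
    have hmat : ρ + (c : ℂ) • ρ' = ((1 + c : ℝ) : ℂ) • σmix := by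
      rw [hρ', hσ]
      ext ij kl
      simp only [Matrix.add_apply, Matrix.smul_apply, Matrix.sub_apply, Matrix.one_apply,
        smul_eq_mul, Complex.ofReal_inv, Complex.ofReal_add, Complex.ofReal_one]
      field_simp
      split_ifs <;> ring
    rw [hmat]
  · -- inclusion of feasible sets
    rintro t ⟨ht0, Ω, Γ, ⟨dA2, Na, ρN, hNa, hρN, hΩ⟩, ⟨dA3, Ga, ρG, hGa, hρG, hGsep, hΓ⟩, heq⟩
    refine ⟨ht0, (fun a b => distMeas (Na a) (Mb b) ρN),
      (fun a b => distMeas (Ga a) (Mb b) ρG),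
      ⟨dA2, dB', Na, Mb, ρN, hNa, hMb, hρN, fun a b => rfl⟩,
      ⟨dA3, dB', Ga, Mb, ρG, hGa, hMb, hρG, hGsep, fun a b => rfl⟩, fun a b => ?_⟩
    ext pq rs
    obtain ⟨p, q⟩ := pq
    obtain ⟨u, s⟩ := rs
    have he : ∀ l' l : Fin dB',
        telep (Ma a) ρ (munit u p) l' l + (t : ℂ) * telep (Na a) ρN (munit u p) l' l =
          ((1 + t : ℝ) : ℂ) * telep (Ga a) ρG (munit u p) l' l := by
      intro l' l
      have h1 := heq a (munit u p)
      rw [hΩ a, hΓ a] at h1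
      have h2 := congrFun (congrFun h1 l') l
      simpa [Matrix.add_apply, Matrix.smul_apply, smul_eq_mul] using h2
    simp only [Matrix.add_apply, Matrix.smul_apply, smul_eq_mul, distMeas_entry]
    simp only [Finset.mul_sum]
    rw [← Finset.sum_add_distrib]
    refine Finset.sum_congr rfl fun l _ => ?_
    rw [← Finset.sum_add_distrib]
    refine Finset.sum_congr rfl fun l' _ => ?_
    linear_combination (Mb b (l, q) (l', s)) * he l' l
end
end

section
/- Replacing the equality constraint in the definition of RoBN by a semidefinite inequality does not change its value: for every distributed measurement M in R_BN, inf { r ≥ 0 : there exist {N_ab} ∈ R_BN and {O_ab} ∈ F_BN with (1+r)·O_ab − M_ab − r·N_ab positive semidefinite for all a, b } = RoBN(M). -/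
open Matrix BigOperators Kronecker ComplexOrder

noncomputable section

/-- Auxiliary: commuting an iterated double sum past an iterated quadruple sum. -/
lemma sum_swap_24 {α β γ δ ε ζ : Type} [Fintype α] [Fintype β] [Fintype γ]
    [Fintype δ] [Fintype ε] [Fintype ζ] (g : α → β → γ → δ → ε → ζ → ℂ) :
    ∑ a, ∑ b, ∑ k, ∑ l, ∑ k', ∑ l', g a b k l k' l'
      = ∑ k, ∑ l, ∑ k', ∑ l', ∑ a, ∑ b, g a b k l k' l' := by
  have e1 : ∑ p : α × β, ∑ q : γ × δ × ε × ζ, g p.1 p.2 q.1 q.2.1 q.2.2.1 q.2.2.2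
      = ∑ a, ∑ b, ∑ k, ∑ l, ∑ k', ∑ l', g a b k l k' l' := by
    simp [Fintype.sum_prod_type]
  have e2 : ∑ q : γ × δ × ε × ζ, ∑ p : α × β, g p.1 p.2 q.1 q.2.1 q.2.2.1 q.2.2.2
      = ∑ k, ∑ l, ∑ k', ∑ l', ∑ a, ∑ b, g a b k l k' l' := by
    simp [Fintype.sum_prod_type]
  rw [← e1, ← e2]
  exact Finset.sum_comm

/-- Auxiliary: positive semidefinite matrices summing to zero are each zero. -/
lemma psd_sum_zero' {n : Type} [Fintype n] [DecidableEq n] {ι : Type} [Fintype ι]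
    (Δ : ι → Matrix n n ℂ) (h : ∀ i, (Δ i).PosSemidef) (hsum : ∑ i, Δ i = 0) :
    ∀ i, Δ i = 0 := by
  intro i
  have hx : ∀ x : n → ℂ, star x ⬝ᵥ (Δ i) *ᵥ x = 0 := by
    intro x
    let φ : Matrix n n ℂ →+ ℂ :=
      { toFun := fun A => star x ⬝ᵥ A *ᵥ x
        map_zero' := by simp
        map_add' := fun A B => by simp [Matrix.add_mulVec, dotProduct_add] }
    have hsumx : ∑ j, star x ⬝ᵥ (Δ j) *ᵥ x = 0 := by
      have : ∑ j, φ (Δ j) = φ (∑ j, Δ j) := (map_sum φ Δ Finset.univ).symm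
      simpa [φ, hsum] using this
    exact (Finset.sum_eq_zero_iff_of_nonneg (fun j _ => (h j).dotProduct_mulVec_nonneg x)).mp hsumx i
      (Finset.mem_univ i)
  ext j k
  have h2 := ((h i).dotProduct_mulVec_zero_iff (Pi.single k 1)).mp (hx _)
  have h3 := congrFun h2 j
  simpa [Matrix.mulVec_single] using h3

/-- Auxiliary: the elements of a distributed measurement built from POVMs and a
normalized state sum to the identity. -/
lemma sum_distMeas_eq_one {dA dA' dB' dB oA oB : ℕ}
    (Ma : Fin oA → Matrix (Fin dA × Fin dA') (Fin dA × Fin dA') ℂ)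
    (Mb : Fin oB → Matrix (Fin dB' × Fin dB) (Fin dB' × Fin dB) ℂ)
    (ρ : BMat dA' dB') (hMa : ∑ a, Ma a = 1) (hMb : ∑ b, Mb b = 1)
    (hρ : ρ.trace = 1) :
    ∑ a, ∑ b, distMeas (Ma a) (Mb b) ρ = 1 := by
  ext pq rs
  simp only [Matrix.sum_apply, distMeas, Matrix.of_apply]
  rw [sum_swap_24 (fun a b k l k' l' =>
    Ma a (pq.1, k) (rs.1, k') * Mb b (l, pq.2) (l', rs.2) * ρ (k', l') (k, l))]
  have key : ∀ (k k' : Fin dA') (l l' : Fin dB'),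
      ∑ a, ∑ b, Ma a (pq.1, k) (rs.1, k') * Mb b (l, pq.2) (l', rs.2)
          * ρ (k', l') (k, l)
        = ((1 : Matrix (Fin dA × Fin dA') (Fin dA × Fin dA') ℂ) (pq.1, k) (rs.1, k'))
          * ((1 : Matrix (Fin dB' × Fin dB) (Fin dB' × Fin dB) ℂ) (l, pq.2) (l', rs.2))
          * ρ (k', l') (k, l) := by
    intro k k' l l'
    rw [← hMa, ← hMb]
    simp only [Matrix.sum_apply, Finset.sum_mul, Finset.mul_sum]
    rw [Finset.sum_comm]
  simp only [key, Matrix.one_apply, Prod.mk.injEq]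
  by_cases h1 : pq.1 = rs.1
  · by_cases h2 : pq.2 = rs.2
    · have hpq : pq = rs := Prod.ext h1 h2
      subst hpq
      simp only [Finset.sum_ite_eq, Finset.sum_ite_eq', Matrix.one_apply_eq, and_true,
        true_and, if_true, ite_mul, one_mul, zero_mul, mul_ite, mul_one, mul_zero,
        Finset.mem_univ, Finset.sum_const_zero, eq_self_iff_true]
      rw [← hρ]
      simp [Matrix.trace, Matrix.diag, Fintype.sum_prod_type]
    · have : pq ≠ rs := fun h => h2 (congrArg Prod.snd h)
      simp [h2, this]
  · have : pq ≠ rs := fun h => h1 (congrArg Prod.fst h)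
    simp [h1, this]

/-- Auxiliary: members of `R_BN` sum to the identity. -/
lemma memRBN_sum_eq_one {dA dB oA oB : ℕ} {M : Fin oA → Fin oB → BMat dA dB}
    (hM : MemRBN M) : ∑ a, ∑ b, M a b = 1 := by
  obtain ⟨dA', dB', Ma, Mb, ρ, hMa, hMb, hρ, hrep⟩ := hM
  calc ∑ a, ∑ b, M a b = ∑ a, ∑ b, distMeas (Ma a) (Mb b) ρ :=
        Finset.sum_congr rfl fun a _ => Finset.sum_congr rfl fun b _ => hrep a b
    _ = 1 := sum_distMeas_eq_one Ma Mb ρ hMa.2 hMb.2 hρ.2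

/-- Auxiliary: members of `F_BN` sum to the identity. -/
lemma memFBN_sum_eq_one {dA dB oA oB : ℕ} {M : Fin oA → Fin oB → BMat dA dB}
    (hM : MemFBN M) : ∑ a, ∑ b, M a b = 1 := by
  obtain ⟨dA', dB', Ma, Mb, ρ, hMa, hMb, hρ, _, hrep⟩ := hM
  calc ∑ a, ∑ b, M a b = ∑ a, ∑ b, distMeas (Ma a) (Mb b) ρ :=
        Finset.sum_congr rfl fun a _ => Finset.sum_congr rfl fun b _ => hrep a b
    _ = 1 := sum_distMeas_eq_one Ma Mb ρ hMa.2 hMb.2 hρ.2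

set_option maxHeartbeats 1000000 in
/-- relaxing the equality constraint in the definition of RoBN to a
semidefinite inequality does not change its value. -/
theorem robn_relaxed_eq {dA dB oA oB : ℕ}
    (M : Fin oA → Fin oB → BMat dA dB) (hM : MemRBN M) :
    sInf { r : ℝ | 0 ≤ r ∧ ∃ (N O : Fin oA → Fin oB → BMat dA dB),
      MemRBN N ∧ MemFBN O ∧
      ∀ a b, (((1 + r : ℝ) : ℂ) • O a b - M a b - (r : ℂ) • N a b).PosSemidef } =
    RoBN M := by
  unfold RoBN
  congr 1
  ext r
  constructor
  · rintro ⟨hr, N, O, hN, hO, hpsd⟩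
    refine ⟨hr, N, O, hN, hO, fun a b => ?_⟩
    have hzero : ∀ p : Fin oA × Fin oB,
        (((1 + r : ℝ) : ℂ) • O p.1 p.2 - M p.1 p.2 - (r : ℂ) • N p.1 p.2) = 0 := by
      refine psd_sum_zero'
        (fun p : Fin oA × Fin oB =>
          ((1 + r : ℝ) : ℂ) • O p.1 p.2 - M p.1 p.2 - (r : ℂ) • N p.1 p.2)
        (fun p => hpsd p.1 p.2) ?_
      have hMs := memRBN_sum_eq_one hM
      have hNs := memRBN_sum_eq_one hN
      have hOs := memFBN_sum_eq_one hO
      have hsum : ∑ p : Fin oA × Fin oB,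
          (((1 + r : ℝ) : ℂ) • O p.1 p.2 - M p.1 p.2 - (r : ℂ) • N p.1 p.2)
          = ((1 + r : ℝ) : ℂ) • (1 : BMat dA dB) - 1 - (r : ℂ) • 1 := by
        simp only [Finset.sum_sub_distrib, ← Finset.smul_sum, Fintype.sum_prod_type]
        rw [hMs, hNs, hOs]
      rw [hsum]
      push_cast
      rw [add_smul, one_smul]
      abel
    have h := hzero (a, b)
    rw [sub_sub, sub_eq_zero] at h
    exact h.symm
  · rintro ⟨hr, N, O, hN, hO, heq⟩
    refine ⟨hr, N, O, hN, hO, fun a b => ?_⟩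
    rw [sub_sub, ← heq a b, sub_self]
    exact ⟨Matrix.isHermitian_zero, fun x => by simp⟩
end
end

section
/- (Weak duality for RoBN) Let M = {M_ab} be a distributed measurement in R_BN. Suppose {A_ab}, {B_b}, {C_a} are families of Hermitian matrices on ℂ^{d_A} ⊗ ℂ^{d_B} and D, E are positive semidefinite matrices on ℂ^{d_A} and ℂ^{d_B} respectively, satisfying: A_ab is positive semidefinite for all a, b; the partial trace over the B factor of C_a equals D for every a; the partial trace over the A factor of B_b equals E for every b; tr D + tr E = 1; and Σ_{a,b} tr[(C_a + B_b − A_ab) X_ab] ≥ 0 for every family {X_ab} ∈ F_BN. Then Σ_{a,b} tr[A_ab M_ab] ≤ 1 + RoBN(M). -/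
open Matrix BigOperators Kronecker ComplexOrder

noncomputable section

section Swaps
variable {M : Type} [AddCommMonoid M]
lemma sc2 {α β : Type} [Fintype α] [Fintype β] (f : α → β → M) :
    ∑ a, ∑ b, f a b = ∑ b, ∑ a, f a b := Finset.sum_comm
lemma sc3 {α β γ : Type} [Fintype α] [Fintype β] [Fintype γ] (f : α → β → γ → M) :
    ∑ a, ∑ b, ∑ c, f a b c = ∑ a, ∑ c, ∑ b, f a b c :=
  Finset.sum_congr rfl fun _ _ => Finset.sum_comm
lemma sc4 {α β γ δ : Type} [Fintype α] [Fintype β] [Fintype γ] [Fintype δ]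
    (f : α → β → γ → δ → M) :
    ∑ a, ∑ b, ∑ c, ∑ d, f a b c d = ∑ a, ∑ b, ∑ d, ∑ c, f a b c d :=
  Finset.sum_congr rfl fun _ _ => sc3 _
lemma sc5 {α β γ δ ε : Type} [Fintype α] [Fintype β] [Fintype γ] [Fintype δ] [Fintype ε]
    (f : α → β → γ → δ → ε → M) :
    ∑ a, ∑ b, ∑ c, ∑ d, ∑ e, f a b c d e = ∑ a, ∑ b, ∑ c, ∑ e, ∑ d, f a b c d e :=
  Finset.sum_congr rfl fun _ _ => sc4 _
lemma sc6 {α β γ δ ε ζ : Type} [Fintype α] [Fintype β] [Fintype γ] [Fintype δ] [Fintype ε]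
    [Fintype ζ] (f : α → β → γ → δ → ε → ζ → M) :
    ∑ a, ∑ b, ∑ c, ∑ d, ∑ e, ∑ x, f a b c d e x
      = ∑ a, ∑ b, ∑ c, ∑ d, ∑ x, ∑ e, f a b c d e x :=
  Finset.sum_congr rfl fun _ _ => sc5 _
end Swaps

lemma trace_CTms_re_nonneg {m n : Type} [Fintype m] [Fintype n] (K : Matrix m n ℂ) :
    0 ≤ ((Kᴴ * K).trace).re := by
  simp only [Matrix.trace, Matrix.diag, Matrix.mul_apply, Matrix.conjTranspose_apply]
  rw [Complex.re_sum]
  refine Finset.sum_nonneg fun j _ => ?_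
  rw [Complex.re_sum]
  refine Finset.sum_nonneg fun i _ => ?_
  simp only [RCLike.star_def, Complex.mul_re, Complex.conj_re, Complex.conj_im]
  nlinarith [sq_nonneg (K i j).re, sq_nonneg (K i j).im]

lemma psd_exists_ct_mul {n : Type} [Fintype n] [DecidableEq n] {X : Matrix n n ℂ}
    (h : X.PosSemidef) : ∃ B : Matrix n n ℂ, X = Bᴴ * B := by
  open scoped MatrixOrder Matrix.Norms.L2Operator in
  obtain ⟨B, hB⟩ := CStarAlgebra.nonneg_iff_eq_star_mul_self.mp (Matrix.nonneg_iff_posSemidef.mpr h)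
  exact ⟨B, hB⟩

lemma trace_mul_psd_re_nonneg {n : Type} [Fintype n] [DecidableEq n] {X Y : Matrix n n ℂ}
    (hX : X.PosSemidef) (hY : Y.PosSemidef) : 0 ≤ ((X * Y).trace).re := by
  obtain ⟨F, rfl⟩ := psd_exists_ct_mul hX
  obtain ⟨G, rfl⟩ := psd_exists_ct_mul hY
  have h2 : ((Fᴴ * F * (Gᴴ * G)).trace) = (((F * Gᴴ)ᴴ * (F * Gᴴ)).trace) := by
    rw [show Fᴴ * F * (Gᴴ * G) = Fᴴ * (F * Gᴴ * G) by
      simp only [Matrix.mul_assoc], Matrix.trace_mul_comm, Matrix.conjTranspose_mul,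
      Matrix.conjTranspose_conjTranspose]
    simp only [Matrix.mul_assoc]
    rw [Matrix.trace_mul_comm F]
    simp only [Matrix.mul_assoc]
    rw [Matrix.trace_mul_comm Gᴴ]
    simp only [Matrix.mul_assoc]
  rw [h2]
  exact trace_CTms_re_nonneg _
lemma distMeas_apply' {dA dA' dB' dB : ℕ}
    (Ma : Matrix (Fin dA × Fin dA') (Fin dA × Fin dA') ℂ)
    (Mb : Matrix (Fin dB' × Fin dB) (Fin dB' × Fin dB) ℂ)
    (ρ : BMat dA' dB') (pq rs : Fin dA × Fin dB) :
    distMeas Ma Mb ρ pq rs =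
      ∑ c : (Fin dA' × Fin dB') × (Fin dA' × Fin dB'),
        Ma (pq.1, c.1.1) (rs.1, c.2.1) * Mb (c.1.2, pq.2) (c.2.2, rs.2) * ρ c.2 c.1 := by
  rw [Fintype.sum_prod_type]
  simp only [Fintype.sum_prod_type]
  rfl

lemma distMeas_add_rho {dA dA' dB' dB : ℕ}
    (Ma : Matrix (Fin dA × Fin dA') (Fin dA × Fin dA') ℂ)
    (Mb : Matrix (Fin dB' × Fin dB) (Fin dB' × Fin dB) ℂ)
    (ρ η : BMat dA' dB') :
    distMeas Ma Mb (ρ + η) = distMeas Ma Mb ρ + distMeas Ma Mb η := by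
  ext pq rs
  simp only [Matrix.add_apply, distMeas_apply', Matrix.add_apply, mul_add,
    Finset.sum_add_distrib]

lemma distMeas_smul_rho {dA dA' dB' dB : ℕ}
    (Ma : Matrix (Fin dA × Fin dA') (Fin dA × Fin dA') ℂ)
    (Mb : Matrix (Fin dB' × Fin dB) (Fin dB' × Fin dB) ℂ)
    (ρ : BMat dA' dB') (c : ℂ) :
    distMeas Ma Mb (c • ρ) = c • distMeas Ma Mb ρ := by
  ext pq rs
  simp only [Matrix.smul_apply, distMeas_apply', Matrix.smul_apply, Finset.mul_sum,
    smul_eq_mul]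
  exact Finset.sum_congr rfl fun c' _ => by ring
lemma sum_mul_mul_sum {α β γ : Type} [Fintype α] [Fintype β] [Fintype γ]
    (f : α → ℂ) (g : β → ℂ) (h : γ → ℂ) :
    (∑ x, f x) * (∑ y, g y) * (∑ z, h z) = ∑ t : α × β × γ, f t.1 * g t.2.1 * h t.2.2 := by
  simp only [Fintype.sum_prod_type, Finset.sum_mul, Finset.mul_sum]
  rw [Finset.sum_comm]
  rw [show (∑ y : β, ∑ z : γ, ∑ x : α, f x * g y * h z)
      = ∑ y : β, ∑ x : α, ∑ z : γ, f x * g y * h z from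
    Finset.sum_congr rfl fun y _ => Finset.sum_comm]
  rw [Finset.sum_comm]

lemma distMeas_posSemidef {dA dA' dB' dB : ℕ}
    {Ma : Matrix (Fin dA × Fin dA') (Fin dA × Fin dA') ℂ}
    {Mb : Matrix (Fin dB' × Fin dB) (Fin dB' × Fin dB) ℂ}
    {ρ : BMat dA' dB'} (hMa : Ma.PosSemidef) (hMb : Mb.PosSemidef)
    (hρ : ρ.PosSemidef) : (distMeas Ma Mb ρ).PosSemidef := by
  obtain ⟨F, rfl⟩ := psd_exists_ct_mul hMa
  obtain ⟨G, rfl⟩ := psd_exists_ct_mul hMb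
  obtain ⟨S, rfl⟩ := psd_exists_ct_mul hρ
  set Y : Matrix ((Fin dA × Fin dA') × (Fin dB' × Fin dB) × (Fin dA' × Fin dB'))
      (Fin dA × Fin dB) ℂ :=
    Matrix.of fun z rs => ∑ c : Fin dA' × Fin dB',
      F z.1 (rs.1, c.1) * G z.2.1 (c.2, rs.2) * star (S z.2.2 c) with hY
  have key : distMeas (Fᴴ * F) (Gᴴ * G) (Sᴴ * S) = Yᴴ * Y := by
    ext pq rs
    rw [distMeas_apply']
    calc
      ∑ c : (Fin dA' × Fin dB') × (Fin dA' × Fin dB'),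
          (Fᴴ * F) (pq.1, c.1.1) (rs.1, c.2.1) * (Gᴴ * G) (c.1.2, pq.2) (c.2.2, rs.2) *
            (Sᴴ * S) c.2 c.1
        = ∑ c : (Fin dA' × Fin dB') × (Fin dA' × Fin dB'),
            ∑ z : (Fin dA × Fin dA') × (Fin dB' × Fin dB) × (Fin dA' × Fin dB'),
              (star (F z.1 (pq.1, c.1.1)) * F z.1 (rs.1, c.2.1)) *
                (star (G z.2.1 (c.1.2, pq.2)) * G z.2.1 (c.2.2, rs.2)) *
                (star (S z.2.2 c.2) * S z.2.2 c.1) := by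
          refine Finset.sum_congr rfl fun c _ => ?_
          simp only [Matrix.mul_apply, Matrix.conjTranspose_apply]
          exact sum_mul_mul_sum _ _ _
      _ = ∑ z : (Fin dA × Fin dA') × (Fin dB' × Fin dB) × (Fin dA' × Fin dB'),
            ∑ c : (Fin dA' × Fin dB') × (Fin dA' × Fin dB'),
              (star (F z.1 (pq.1, c.1.1)) * F z.1 (rs.1, c.2.1)) *
                (star (G z.2.1 (c.1.2, pq.2)) * G z.2.1 (c.2.2, rs.2)) *
                (star (S z.2.2 c.2) * S z.2.2 c.1) := Finset.sum_comm
      _ = (Yᴴ * Y) pq rs := by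
          rw [Matrix.mul_apply]
          refine Finset.sum_congr rfl fun z _ => ?_
          rw [Matrix.conjTranspose_apply, hY]
          simp only [Matrix.of_apply, star_sum, star_mul', star_star, Finset.sum_mul_sum]
          rw [Fintype.sum_prod_type]
          refine Finset.sum_congr rfl fun c1 _ => ?_
          refine Finset.sum_congr rfl fun c2 _ => ?_
          ring
  rw [key]
  exact Matrix.posSemidef_conjTranspose_mul_self Y
lemma sum_distMeas_mb {dA dA' dB' dB oB : ℕ}
    (Ma : Matrix (Fin dA × Fin dA') (Fin dA × Fin dA') ℂ)
    (Mb : Fin oB → Matrix (Fin dB' × Fin dB) (Fin dB' × Fin dB) ℂ)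
    (ρ : BMat dA' dB') :
    ∑ b, distMeas Ma (Mb b) ρ = distMeas Ma (∑ b, Mb b) ρ := by
  ext pq rs
  simp only [Matrix.sum_apply, distMeas_apply', Matrix.sum_apply]
  rw [Finset.sum_comm]
  refine Finset.sum_congr rfl fun c _ => ?_
  rw [Finset.mul_sum, Finset.sum_mul]

lemma sum_distMeas_ma {dA dA' dB' dB oA : ℕ}
    (Ma : Fin oA → Matrix (Fin dA × Fin dA') (Fin dA × Fin dA') ℂ)
    (Mb : Matrix (Fin dB' × Fin dB) (Fin dB' × Fin dB) ℂ)
    (ρ : BMat dA' dB') :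
    ∑ a, distMeas (Ma a) Mb ρ = distMeas (∑ a, Ma a) Mb ρ := by
  ext pq rs
  simp only [Matrix.sum_apply, distMeas_apply', Matrix.sum_apply]
  rw [Finset.sum_comm]
  refine Finset.sum_congr rfl fun c _ => ?_
  rw [Finset.sum_mul, Finset.sum_mul]

lemma trace_C_distMeas_one {dA dA' dB' dB : ℕ} (C : BMat dA dB)
    (Ma : Matrix (Fin dA × Fin dA') (Fin dA × Fin dA') ℂ)
    (ρ : BMat dA' dB') :
    (C * distMeas Ma (1) ρ).trace =
      ((ptraceSnd C) *
        Matrix.of (fun p r : Fin dA => ∑ k, ∑ k', Ma (p, k) (r, k') * ptraceSnd ρ k' k)).trace := by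
  simp only [Matrix.trace, Matrix.diag, Matrix.mul_apply, Matrix.of_apply, ptraceSnd,
    distMeas, Matrix.one_apply, Prod.mk.injEq, mul_ite, ite_mul, mul_zero, zero_mul,
    mul_one, one_mul, ite_and, Finset.sum_ite_eq, Finset.sum_ite_eq', Finset.mem_univ,
    if_true, Fintype.sum_prod_type]
  simp only [Finset.sum_ite_irrel, Finset.sum_const_zero, mul_ite, mul_zero,
    Finset.sum_ite_eq, Finset.sum_ite_eq', Finset.mem_univ, if_true, Finset.sum_mul, Finset.mul_sum]
  rw [sc3, sc4, sc5, sc6, sc5]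
lemma trace_B_distMeas_one {dA dA' dB' dB : ℕ} (B : BMat dA dB)
    (Mb : Matrix (Fin dB' × Fin dB) (Fin dB' × Fin dB) ℂ)
    (ρ : BMat dA' dB') :
    (B * distMeas (1 : Matrix (Fin dA × Fin dA') (Fin dA × Fin dA') ℂ) Mb ρ).trace =
      ((ptraceFst B) *
        Matrix.of (fun q s : Fin dB => ∑ l, ∑ l', Mb (l, q) (l', s) * ptraceFst ρ l' l)).trace := by
  simp only [Matrix.trace, Matrix.diag, Matrix.mul_apply, Matrix.of_apply, ptraceFst,
    distMeas, Matrix.one_apply, Prod.mk.injEq, mul_ite, ite_mul, mul_zero, zero_mul,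
    mul_one, one_mul, ite_and, Finset.sum_ite_irrel, Finset.sum_const_zero,
    Finset.sum_ite_eq, Finset.sum_ite_eq', Finset.mem_univ,
    if_true, Fintype.sum_prod_type, Finset.sum_mul, Finset.mul_sum]
  rw [sc2, sc3, sc4, sc5, sc6, sc4, sc5]
lemma trace_prod {dA' dB' : ℕ} (ρ : BMat dA' dB') :
    ρ.trace = ∑ k : Fin dA', ∑ l : Fin dB', ρ (k, l) (k, l) := by
  rw [Matrix.trace]
  rw [Fintype.sum_prod_type]
  rfl

lemma traceC_total {dA dA' dB' dB oA oB : ℕ}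
    (Ma : Fin oA → Matrix (Fin dA × Fin dA') (Fin dA × Fin dA') ℂ)
    (Mb : Fin oB → Matrix (Fin dB' × Fin dB) (Fin dB' × Fin dB) ℂ)
    (ρ : BMat dA' dB') (C : Fin oA → BMat dA dB) (D : Mat dA)
    (hMa : ∑ a, Ma a = 1) (hMb : ∑ b, Mb b = 1) (hρtr : ρ.trace = 1)
    (hCD : ∀ a, ptraceSnd (C a) = D) :
    ∑ a, ∑ b, ((C a) * distMeas (Ma a) (Mb b) ρ).trace = D.trace := by
  have step1 : ∀ a, ∑ b, ((C a) * distMeas (Ma a) (Mb b) ρ).trace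
      = ((C a) * distMeas (Ma a) (1) ρ).trace := by
    intro a
    rw [← hMb, ← sum_distMeas_mb, Matrix.mul_sum, Matrix.trace_sum]
  have step2 : ∀ a, ((C a) * distMeas (Ma a) (1) ρ).trace
      = (D * Matrix.of (fun p r : Fin dA =>
          ∑ k, ∑ k', Ma a (p, k) (r, k') * ptraceSnd ρ k' k)).trace := by
    intro a
    rw [trace_C_distMeas_one, hCD]
  have step3 : ∑ a, (Matrix.of (fun p r : Fin dA =>
      ∑ k, ∑ k', Ma a (p, k) (r, k') * ptraceSnd ρ k' k)) = (1 : Mat dA) := by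
    ext p r
    simp only [Matrix.sum_apply, Matrix.of_apply]
    rw [sc2, sc3]
    simp only [← Finset.sum_mul, ← Matrix.sum_apply, hMa]
    simp only [Matrix.one_apply, Prod.mk.injEq, ite_and, ite_mul, one_mul, zero_mul,
      Finset.sum_ite_irrel, Finset.sum_const_zero, Finset.sum_ite_eq, Finset.sum_ite_eq',
      Finset.mem_univ, if_true]
    simp only [ptraceSnd, Matrix.of_apply]
    rw [← trace_prod, hρtr]
  calc ∑ a, ∑ b, ((C a) * distMeas (Ma a) (Mb b) ρ).trace
      = ∑ a, (D * Matrix.of (fun p r : Fin dA =>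
          ∑ k, ∑ k', Ma a (p, k) (r, k') * ptraceSnd ρ k' k)).trace := by
        refine Finset.sum_congr rfl fun a _ => ?_
        rw [step1, step2]
    _ = D.trace := by
        rw [← Matrix.trace_sum, ← Matrix.mul_sum, step3, Matrix.mul_one]

lemma traceB_total {dA dA' dB' dB oA oB : ℕ}
    (Ma : Fin oA → Matrix (Fin dA × Fin dA') (Fin dA × Fin dA') ℂ)
    (Mb : Fin oB → Matrix (Fin dB' × Fin dB) (Fin dB' × Fin dB) ℂ)
    (ρ : BMat dA' dB') (B : Fin oB → BMat dA dB) (E : Mat dB)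
    (hMa : ∑ a, Ma a = 1) (hMb : ∑ b, Mb b = 1) (hρtr : ρ.trace = 1)
    (hBE : ∀ b, ptraceFst (B b) = E) :
    ∑ a, ∑ b, ((B b) * distMeas (Ma a) (Mb b) ρ).trace = E.trace := by
  rw [Finset.sum_comm]
  have step1 : ∀ b, ∑ a, ((B b) * distMeas (Ma a) (Mb b) ρ).trace
      = ((B b) * distMeas (1) (Mb b) ρ).trace := by
    intro b
    rw [← hMa, ← sum_distMeas_ma, Matrix.mul_sum, Matrix.trace_sum]
  have step2 : ∀ b, ((B b) * distMeas (1) (Mb b) ρ).trace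
      = (E * Matrix.of (fun q s : Fin dB =>
          ∑ l, ∑ l', Mb b (l, q) (l', s) * ptraceFst ρ l' l)).trace := by
    intro b
    rw [trace_B_distMeas_one, hBE]
  have step3 : ∑ b, (Matrix.of (fun q s : Fin dB =>
      ∑ l, ∑ l', Mb b (l, q) (l', s) * ptraceFst ρ l' l)) = (1 : Mat dB) := by
    ext q s
    simp only [Matrix.sum_apply, Matrix.of_apply]
    rw [sc2, sc3]
    simp only [← Finset.sum_mul, ← Matrix.sum_apply, hMb]
    simp only [Matrix.one_apply, Prod.mk.injEq, ite_and, ite_mul, one_mul, zero_mul,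
      Finset.sum_ite_irrel, Finset.sum_const_zero, Finset.sum_ite_eq, Finset.sum_ite_eq',
      Finset.mem_univ, if_true]
    simp only [ptraceFst, Matrix.of_apply]
    rw [show ∑ l : Fin dB', ∑ k : Fin dA', ρ (k, l) (k, l) = ρ.trace from by
      rw [trace_prod]; exact Finset.sum_comm, hρtr]
  calc ∑ b, ∑ a, ((B b) * distMeas (Ma a) (Mb b) ρ).trace
      = ∑ b, (E * Matrix.of (fun q s : Fin dB =>
          ∑ l, ∑ l', Mb b (l, q) (l', s) * ptraceFst ρ l' l)).trace := by
        refine Finset.sum_congr rfl fun b _ => ?_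
        rw [step1, step2]
    _ = E.trace := by
        rw [← Matrix.trace_sum, ← Matrix.mul_sum, step3, Matrix.mul_one]
lemma resmul_posSemidef {n : Type} [Fintype n] {X : Matrix n n ℂ} (hX : X.PosSemidef)
    {c : ℝ} (hc : 0 ≤ c) : (((c : ℂ)) • X).PosSemidef := by
  refine Matrix.PosSemidef.of_dotProduct_mulVec_nonneg ?_ ?_
  · unfold Matrix.IsHermitian
    rw [Matrix.conjTranspose_smul, hX.1.eq]
    congr 1
    simp [Complex.ext_iff]
  · intro x
    rw [Matrix.smul_mulVec, dotProduct_smul, smul_eq_mul]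
    have h := hX.dotProduct_mulVec_nonneg x
    rw [Complex.le_def] at h ⊢
    constructor
    · simp only [Complex.zero_re, Complex.re_ofReal_mul]
      exact mul_nonneg hc h.1
    · simp only [Complex.zero_im]
      rw [Complex.mul_im]
      simp [← h.2]

lemma smul_one_sub_posSemidef {n : Type} [Fintype n] [DecidableEq n] {ρ : Matrix n n ℂ}
    (hρ : ρ.PosSemidef) (htr : ρ.trace = 1) {c : ℝ} (hc : 1 ≤ c) :
    (((c : ℝ) : ℂ) • 1 - ρ).PosSemidef := by
  obtain ⟨S, hS⟩ := psd_exists_ct_mul hρ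
  refine Matrix.PosSemidef.of_dotProduct_mulVec_nonneg ?_ ?_
  · unfold Matrix.IsHermitian
    rw [Matrix.conjTranspose_sub, Matrix.conjTranspose_smul, hρ.1.eq, Matrix.conjTranspose_one]
    congr 2
    simp [Complex.ext_iff]
  · intro x
    have hsx : dotProduct (star x) x = ((∑ i, Complex.normSq (x i) : ℝ) : ℂ) := by
      simp only [dotProduct, Pi.star_apply, Complex.ofReal_sum]
      exact Finset.sum_congr rfl fun i _ => by
        rw [RCLike.star_def, mul_comm, Complex.mul_conj]
    have ht : dotProduct (star x) (ρ *ᵥ x)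
        = ((∑ i, Complex.normSq ((S *ᵥ x) i) : ℝ) : ℂ) := by
      rw [hS, ← Matrix.mulVec_mulVec, Matrix.dotProduct_mulVec, Matrix.vecMul_conjTranspose,
        star_star]
      simp only [dotProduct, Pi.star_apply, Complex.ofReal_sum]
      exact Finset.sum_congr rfl fun i _ => by
        rw [RCLike.star_def, mul_comm, Complex.mul_conj]
    have htrS : (∑ j, ∑ i, Complex.normSq (S i j)) = 1 := by
      have : ρ.trace = ((∑ j, ∑ i, Complex.normSq (S i j) : ℝ) : ℂ) := by
        rw [hS]
        simp only [Matrix.trace, Matrix.diag, Matrix.mul_apply, Matrix.conjTranspose_apply,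
          Complex.ofReal_sum]
        refine Finset.sum_congr rfl fun j _ => Finset.sum_congr rfl fun i _ => by
          rw [RCLike.star_def, mul_comm, Complex.mul_conj]
      rw [this] at htr
      exact_mod_cast htr
    -- Cauchy-Schwarz bound
    have cs : ∀ i, Complex.normSq ((S *ᵥ x) i)
        ≤ (∑ j, Complex.normSq (S i j)) * (∑ j, Complex.normSq (x j)) := by
      intro i
      have h1 : ‖(S *ᵥ x) i‖ ≤ ∑ j, ‖S i j‖ * ‖x j‖ := by
        rw [Matrix.mulVec, dotProduct]
        refine le_trans (norm_sum_le _ _) ?_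
        exact le_of_eq (Finset.sum_congr rfl fun j _ => norm_mul _ _)
      have h2 := Finset.sum_mul_sq_le_sq_mul_sq Finset.univ
        (fun j => ‖S i j‖) (fun j => ‖x j‖)
      have h3 : ‖(S *ᵥ x) i‖ ^ 2 ≤ (∑ j, ‖S i j‖ * ‖x j‖) ^ 2 := by
        have := norm_nonneg ((S *ᵥ x) i)
        nlinarith [Finset.sum_nonneg (fun j (_ : j ∈ Finset.univ) =>
          mul_nonneg (norm_nonneg (S i j)) (norm_nonneg (x j)))]
      calc Complex.normSq ((S *ᵥ x) i) = ‖(S *ᵥ x) i‖ ^ 2 := (Complex.sq_norm _).symm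
        _ ≤ (∑ j, ‖S i j‖ * ‖x j‖) ^ 2 := h3
        _ ≤ (∑ j, ‖S i j‖ ^ 2) * (∑ j, ‖x j‖ ^ 2) := h2
        _ = (∑ j, Complex.normSq (S i j)) * (∑ j, Complex.normSq (x j)) := by
            simp [Complex.sq_norm]
    have bound : (∑ i, Complex.normSq ((S *ᵥ x) i)) ≤ ∑ j, Complex.normSq (x j) := by
      calc (∑ i, Complex.normSq ((S *ᵥ x) i))
          ≤ ∑ i, (∑ j, Complex.normSq (S i j)) * (∑ j, Complex.normSq (x j)) :=
            Finset.sum_le_sum fun i _ => cs i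
        _ = (∑ i, ∑ j, Complex.normSq (S i j)) * (∑ j, Complex.normSq (x j)) := by
            rw [Finset.sum_mul]
        _ = 1 * (∑ j, Complex.normSq (x j)) := by rw [Finset.sum_comm, htrS]
        _ = ∑ j, Complex.normSq (x j) := one_mul _
    rw [Matrix.sub_mulVec, dotProduct_sub, Matrix.smul_mulVec,
      Matrix.one_mulVec, dotProduct_smul, smul_eq_mul, hsx, ht, Complex.le_def]
    have hxnn : 0 ≤ ∑ j, Complex.normSq (x j) :=
      Finset.sum_nonneg fun j _ => Complex.normSq_nonneg _
    have hSnn : 0 ≤ ∑ i, Complex.normSq ((S *ᵥ x) i) :=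
      Finset.sum_nonneg fun i _ => Complex.normSq_nonneg _
    constructor
    · simp only [Complex.zero_re, Complex.sub_re, Complex.re_ofReal_mul, Complex.ofReal_re]
      nlinarith
    · simp [Complex.mul_im]
lemma stdBasis_density {n : ℕ} (k : Fin n) :
    IsDensity (Matrix.single k k (1 : ℂ)) := by
  constructor
  · have he : (Matrix.single k k (1 : ℂ))ᴴ = Matrix.single k k (1 : ℂ) := by
      ext i j
      simp [Matrix.single, Matrix.conjTranspose_apply, and_comm]
    have hm : Matrix.single k k (1 : ℂ)
        = (Matrix.single k k (1 : ℂ))ᴴ * Matrix.single k k (1 : ℂ) := by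
      rw [he, Matrix.single_mul_single_same, mul_one]
    rw [hm]
    exact Matrix.posSemidef_conjTranspose_mul_self _
  · simp [Matrix.trace, Matrix.diag, Matrix.single]

lemma sum_stdBasis_kron {dA' dB' : ℕ} :
    ∑ z : Fin dA' × Fin dB',
      (Matrix.single z.1 z.1 (1 : ℂ)) ⊗ₖ (Matrix.single z.2 z.2 (1 : ℂ))
      = (1 : BMat dA' dB') := by
  ext ⟨i, j⟩ ⟨i', j'⟩
  simp only [Matrix.sum_apply, Matrix.kroneckerMap_apply, Matrix.single,
    Matrix.one_apply, Matrix.of_apply, Prod.mk.injEq, ite_and, mul_ite, ite_mul,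
    mul_one, one_mul, mul_zero, zero_mul, Fintype.sum_prod_type,
    Finset.sum_ite_irrel, Finset.sum_const_zero, Finset.sum_ite_eq, Finset.sum_ite_eq',
    Finset.mem_univ, if_true]
  by_cases h1 : i = i' <;> by_cases h2 : j = j' <;> simp [h1, h2]

lemma sep_max_mixed {dA' dB' : ℕ} (h : 0 < dA' * dB') :
    SepState ((((dA' * dB' : ℕ) : ℝ)⁻¹ : ℂ) • (1 : BMat dA' dB')) := by
  refine ⟨dA' * dB', fun _ => ((dA' * dB' : ℕ) : ℝ)⁻¹,
    fun l => Matrix.single (finProdFinEquiv.symm l).1 (finProdFinEquiv.symm l).1 1,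
    fun l => Matrix.single (finProdFinEquiv.symm l).2 (finProdFinEquiv.symm l).2 1,
    fun _ => by positivity, ?_, fun l => stdBasis_density _, fun l => stdBasis_density _, ?_⟩
  · rw [Finset.sum_const, Finset.card_univ, Fintype.card_fin, nsmul_eq_mul]
    rw [mul_inv_cancel₀]
    exact_mod_cast h.ne'
  · rw [← Finset.smul_sum]
    congr 1
    · push_cast
      ring
    rw [← sum_stdBasis_kron (dA' := dA') (dB' := dB')]
    exact Fintype.sum_equiv finProdFinEquiv _ _ fun z => by simp only [Equiv.symm_apply_apply]

/-- weak duality for RoBN: any feasible family of dual variables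
gives a lower bound on `1 + RoBN(M)`. -/
theorem robn_weak_duality {dA dB oA oB : ℕ}
    (M : Fin oA → Fin oB → BMat dA dB) (hM : MemRBN M)
    (A : Fin oA → Fin oB → BMat dA dB) (B : Fin oB → BMat dA dB)
    (C : Fin oA → BMat dA dB) (D : Mat dA) (E : Mat dB)
    (hAh : ∀ a b, (A a b).IsHermitian) (hBh : ∀ b, (B b).IsHermitian)
    (hCh : ∀ a, (C a).IsHermitian)
    (hD : D.PosSemidef) (hE : E.PosSemidef)
    (hApsd : ∀ a b, (A a b).PosSemidef)
    (hCD : ∀ a, ptraceSnd (C a) = D)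
    (hBE : ∀ b, ptraceFst (B b) = E)
    (hTr : D.trace + E.trace = 1)
    (hF : ∀ X : Fin oA → Fin oB → BMat dA dB, MemFBN X →
      0 ≤ (∑ a, ∑ b, ((C a + B b - A a b) * X a b).trace).re) :
    (∑ a, ∑ b, (A a b * M a b).trace).re ≤ 1 + RoBN M := by
  classical
  obtain ⟨dA1, dB1, Ma1, Mb1, ρ1, hMa1, hMb1, hρ1, hMeq⟩ := hM
  -- Part A: any feasible r bounds the value
  have key : ∀ r : ℝ, (0 ≤ r ∧ ∃ N O : Fin oA → Fin oB → BMat dA dB,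
      MemRBN N ∧ MemFBN O ∧ ∀ a b, M a b + (r : ℂ) • N a b = ((1 + r : ℝ) : ℂ) • O a b) →
      (∑ a, ∑ b, (A a b * M a b).trace).re ≤ 1 + r := by
    rintro r ⟨hr0, N, O, hN, hO, heq⟩
    obtain ⟨dA2, dB2, Ma2, Mb2, ρ2, hMa2, hMb2, hρ2, hsep2, hOeq⟩ := hO
    have hOC : ∑ a, ∑ b, ((C a) * O a b).trace = D.trace := by
      calc ∑ a, ∑ b, ((C a) * O a b).trace
          = ∑ a, ∑ b, ((C a) * distMeas (Ma2 a) (Mb2 b) ρ2).trace :=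
            Finset.sum_congr rfl fun a _ => Finset.sum_congr rfl fun b _ => by rw [hOeq]
        _ = D.trace := traceC_total Ma2 Mb2 ρ2 C D hMa2.2 hMb2.2 hρ2.2 hCD
    have hOB : ∑ a, ∑ b, ((B b) * O a b).trace = E.trace := by
      calc ∑ a, ∑ b, ((B b) * O a b).trace
          = ∑ a, ∑ b, ((B b) * distMeas (Ma2 a) (Mb2 b) ρ2).trace :=
            Finset.sum_congr rfl fun a _ => Finset.sum_congr rfl fun b _ => by rw [hOeq]
        _ = E.trace := traceB_total Ma2 Mb2 ρ2 B E hMa2.2 hMb2.2 hρ2.2 hBE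
    have hFO := hF O ⟨dA2, dB2, Ma2, Mb2, ρ2, hMa2, hMb2, hρ2, hsep2, hOeq⟩
    have hexp : (∑ a, ∑ b, ((C a + B b - A a b) * O a b).trace)
        = 1 - ∑ a, ∑ b, ((A a b) * O a b).trace := by
      have hstep : ∀ a b, ((C a + B b - A a b) * O a b).trace
          = (((C a) * O a b).trace + ((B b) * O a b).trace) - ((A a b) * O a b).trace := by
        intro a b
        rw [Matrix.sub_mul, Matrix.add_mul, Matrix.trace_sub, Matrix.trace_add]
      simp_rw [hstep]
      simp only [Finset.sum_sub_distrib, Finset.sum_add_distrib]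
      rw [hOC, hOB, hTr]
    have vOle : (∑ a, ∑ b, ((A a b) * O a b).trace).re ≤ 1 := by
      rw [hexp] at hFO
      simp only [Complex.sub_re, Complex.one_re] at hFO
      linarith
    obtain ⟨dA3, dB3, Ma3, Mb3, ρ3, hMa3, hMb3, hρ3, hNeq⟩ := hN
    have vNnn : 0 ≤ (∑ a, ∑ b, ((A a b) * N a b).trace).re := by
      rw [Complex.re_sum]
      refine Finset.sum_nonneg fun a _ => ?_
      rw [Complex.re_sum]
      refine Finset.sum_nonneg fun b _ => ?_
      rw [hNeq]
      exact trace_mul_psd_re_nonneg (hApsd a b)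
        (distMeas_posSemidef (hMa3.1 a) (hMb3.1 b) hρ3.1)
    have hM_eq : ∀ a b, (A a b * M a b).trace
        = ((1 + r : ℝ) : ℂ) * (A a b * O a b).trace - (r : ℂ) * (A a b * N a b).trace := by
      intro a b
      have h1 : M a b = ((1 + r : ℝ) : ℂ) • O a b - (r : ℂ) • N a b :=
        eq_sub_of_add_eq (heq a b)
      rw [h1, Matrix.mul_sub, Matrix.mul_smul, Matrix.mul_smul, Matrix.trace_sub,
        Matrix.trace_smul, Matrix.trace_smul, smul_eq_mul, smul_eq_mul]
    have hvsplit : (∑ a, ∑ b, (A a b * M a b).trace).re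
        = (1 + r) * (∑ a, ∑ b, ((A a b) * O a b).trace).re
          - r * (∑ a, ∑ b, ((A a b) * N a b).trace).re := by
      simp_rw [hM_eq]
      simp only [Finset.sum_sub_distrib, ← Finset.mul_sum, Complex.sub_re,
        Complex.re_ofReal_mul]
    rw [hvsplit]
    nlinarith [mul_nonneg hr0 vNnn,
      mul_le_mul_of_nonneg_left vOle (by linarith : (0:ℝ) ≤ 1 + r)]
  -- Part B: the feasible set is nonempty
  have hne : Nonempty (Fin dA1 × Fin dB1) := by
    by_contra hcon
    rw [not_nonempty_iff] at hcon
    have h0 : ρ1.trace = 0 := by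
      rw [Matrix.trace]
      simp [Finset.univ_eq_empty]
    rw [hρ1.2] at h0
    exact one_ne_zero h0
  have hd : 0 < dA1 * dB1 := by
    obtain ⟨k, l⟩ := hne
    exact Nat.mul_pos k.pos l.pos
  have hdRpos : (0:ℝ) < ((dA1 * dB1 : ℕ) : ℝ) := by exact_mod_cast hd
  set dR : ℝ := ((dA1 * dB1 : ℕ) : ℝ) with hdRdef
  have hdRne : dR ≠ 0 := ne_of_gt hdRpos
  set cc : ℝ := (1 + dR) * dR⁻¹ with hccdef
  have hcc1 : 1 ≤ cc := by
    rw [hccdef, add_mul, one_mul, mul_inv_cancel₀ hdRne]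
    have h9 : 0 ≤ dR⁻¹ := by positivity
    linarith
  set σmat : BMat dA1 dB1 := ((dR⁻¹ : ℝ) : ℂ) • (1 : BMat dA1 dB1) with hσdef
  set ηmat : BMat dA1 dB1 :=
    ((dR⁻¹ : ℝ) : ℂ) • (((cc : ℝ) : ℂ) • (1 : BMat dA1 dB1) - ρ1) with hηdef
  have htr1 : (1 : BMat dA1 dB1).trace = ((dR : ℝ) : ℂ) := by
    rw [Matrix.trace_one, hdRdef]
    push_cast [Fintype.card_prod]
    norm_num
  have hσpsd : σmat.PosSemidef := by
    rw [hσdef]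
    exact resmul_posSemidef Matrix.PosDef.one.posSemidef (by positivity)
  have hσtr : σmat.trace = 1 := by
    rw [hσdef, Matrix.trace_smul, htr1, smul_eq_mul,
      show ((dR⁻¹ : ℝ) : ℂ) * ((dR : ℝ) : ℂ) = ((dR⁻¹ * dR : ℝ) : ℂ) by push_cast; ring,
      inv_mul_cancel₀ hdRne]
    norm_num
  have hηpsd : ηmat.PosSemidef := by
    rw [hηdef]
    exact resmul_posSemidef (smul_one_sub_posSemidef hρ1.1 hρ1.2 hcc1) (by positivity)
  have hccr : cc * dR = 1 + dR := by
    rw [hccdef]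
    field_simp
  have hηtr : ηmat.trace = 1 := by
    rw [hηdef, Matrix.trace_smul, Matrix.trace_sub, Matrix.trace_smul, htr1, hρ1.2,
      smul_eq_mul, smul_eq_mul,
      show ((cc : ℝ) : ℂ) * ((dR : ℝ) : ℂ) = ((cc * dR : ℝ) : ℂ) by push_cast; ring,
      hccr]
    push_cast
    field_simp
    ring
  have hstate : ρ1 + ((dR : ℝ) : ℂ) • ηmat = ((1 + dR : ℝ) : ℂ) • σmat := by
    rw [hηdef, hσdef, smul_smul, smul_smul,
      show ((dR : ℝ) : ℂ) * ((dR⁻¹ : ℝ) : ℂ) = 1 by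
        push_cast
        field_simp,
      one_smul, add_sub_cancel]
    congr 1
    rw [hccdef]
    push_cast
    ring
  have hfeas : ∀ a b, M a b + ((dR : ℝ) : ℂ) • distMeas (Ma1 a) (Mb1 b) ηmat
      = ((1 + dR : ℝ) : ℂ) • distMeas (Ma1 a) (Mb1 b) σmat := by
    intro a b
    rw [hMeq a b, ← distMeas_smul_rho, ← distMeas_add_rho, hstate, distMeas_smul_rho]
  have hsep : SepState σmat := by
    have h7 := sep_max_mixed (dA' := dA1) (dB' := dB1) hd
    have h8 : ((((dA1 * dB1 : ℕ) : ℝ)⁻¹ : ℂ)) • (1 : BMat dA1 dB1) = σmat := by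
      rw [hσdef, hdRdef]
      norm_cast
    rwa [h8] at h7
  have hmem : dR ∈ { r : ℝ | 0 ≤ r ∧ ∃ (N O : Fin oA → Fin oB → BMat dA dB),
      MemRBN N ∧ MemFBN O ∧
      ∀ a b, M a b + (r : ℂ) • N a b = ((1 + r : ℝ) : ℂ) • O a b } := by
    exact ⟨hdRpos.le,
      (fun a b => distMeas (Ma1 a) (Mb1 b) ηmat),
      (fun a b => distMeas (Ma1 a) (Mb1 b) σmat),
      ⟨dA1, dB1, Ma1, Mb1, ηmat, hMa1, hMb1, ⟨hηpsd, hηtr⟩, fun a b => rfl⟩,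
      ⟨dA1, dB1, Ma1, Mb1, σmat, hMa1, hMb1, ⟨hσpsd, hσtr⟩, hsep, fun a b => rfl⟩,
      hfeas⟩
  have hRoBN : (∑ a, ∑ b, (A a b * M a b).trace).re - 1 ≤ RoBN M := by
    refine le_csInf ⟨dR, hmem⟩ fun b hb => ?_
    have := key b hb
    linarith
  linarith
end
end
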